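/- arXiv:2507.23743 — 3 statements merged into one kernel-verified Lean document; each statement's English description precedes it below -/
import Mathlib

section
/- Consider jointly distributed mean-zero L² random variables satisfying the structural equations Y = β_u U + β_{w_y} W_Y + β_{w_z} W_Z + τ Z + ε_y, Z = γ_u U + γ_{w_y} W_Y + γ_{w_z} W_Z + ε_z, W_Y = α_u U + α_{w_z} W_Z + ε_{w_y}, W_Z = φ_u U + ε_{w_z}, where ε_y, ε_z, ε_{w_y}, ε_{w_z}, U are pairwise uncorrelated mean-zero random variables with positive variance. If γ_{w_y} = 0, α_{w_z} = 0, and β_{w_z} = 0 (the proximal assumptions), and α_u ≠ 0, γ_{w_z} ≠ 0, then the two-stage least squares proximal estimand τ_prox, defined as the population coefficient on Z in the regression of Y on Z and Ŵ_Y (where Ŵ_Y is the population linear projection of W_Y onto the span of Z and W_Z), satisfies τ_prox = τ. -/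
open Submodule RealInnerProductSpace

/-- Orthogonal projection of `A` onto the span of the finite set `S`. -/
noncomputable def projSpan {H : Type*} [NormedAddCommGroup H] [InnerProductSpace ℝ H]
    [CompleteSpace H] (S : Set H) (hS : S.Finite) (A : H) : H :=
  haveI := hS.to_subtype
  haveI : FiniteDimensional ℝ (span ℝ S) := FiniteDimensional.span_of_finite ℝ hS
  (orthogonalProjection (span ℝ S) A : H)

lemma projSpan_mem {H : Type*} [NormedAddCommGroup H] [InnerProductSpace ℝ H]
    [CompleteSpace H] (S : Set H) (hS : S.Finite) (A : H) :
    projSpan S hS A ∈ span ℝ S := by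
  haveI := hS.to_subtype
  haveI : FiniteDimensional ℝ (span ℝ S) := FiniteDimensional.span_of_finite ℝ hS
  exact (orthogonalProjection (span ℝ S) A).2

lemma projSpan_orth {H : Type*} [NormedAddCommGroup H] [InnerProductSpace ℝ H]
    [CompleteSpace H] (S : Set H) (hS : S.Finite) (A : H) :
    A - projSpan S hS A ∈ (span ℝ S)ᗮ := by
  haveI := hS.to_subtype
  haveI : FiniteDimensional ℝ (span ℝ S) := FiniteDimensional.span_of_finite ℝ hS
  exact (span ℝ S).sub_starProjection_mem_orthogonal A

/-- Proposition 3 (proximal validity). Random variables are modeled as vectors in a real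
Hilbert space, with inner product playing the role of the covariance of mean-zero L²
random variables. Under the proximal assumptions `γ_{w_y} = 0`, `α_{w_z} = 0`,
`β_{w_z} = 0`, with `α_u ≠ 0` and `γ_{w_z} ≠ 0`, the coefficient on `Z` in the population
regression of `Y` on `(Z, Ŵ_Y)` — characterized by the normal equations — equals `τ`,
where `Ŵ_Y` is the population linear projection of `W_Y` onto the span of `Z` and `W_Z`. -/
theorem stmt_3 {H : Type*} [NormedAddCommGroup H] [InnerProductSpace ℝ H] [CompleteSpace H]
    (Y Z WZ WY U εy εz εwy εwz : H)
    (τ βu βwy βwz γu γwy γwz αu αwz φu : ℝ)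
    (hY : Y = βu • U + βwy • WY + βwz • WZ + τ • Z + εy)
    (hZ : Z = γu • U + γwy • WY + γwz • WZ + εz)
    (hWY : WY = αu • U + αwz • WZ + εwy)
    (hWZ : WZ = φu • U + εwz)
    (horth : ∀ i j : Fin 5, i ≠ j →
      ⟪(![εy, εz, εwy, εwz, U]) i, (![εy, εz, εwy, εwz, U]) j⟫ = 0)
    (hpos : ∀ i : Fin 5, 0 < ⟪(![εy, εz, εwy, εwz, U]) i, (![εy, εz, εwy, εwz, U]) i⟫)
    (hγwy : γwy = 0) (hαwz : αwz = 0) (hβwz : βwz = 0)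
    (hαu : αu ≠ 0) (hγwz : γwz ≠ 0)
    (Why : H)
    (hWhy : Why = projSpan {Z, WZ} (Set.toFinite _) WY)
    (hli : LinearIndependent ℝ ![Z, Why]) :
    ∀ t c : ℝ,
      ⟪Y - (t • Z + c • Why), Z⟫ = 0 →
      ⟪Y - (t • Z + c • Why), Why⟫ = 0 →
      t = τ := by
  intro t c hZeq hWeq
  subst hγwy hαwz hβwz
  have h01 : ⟪εy, εz⟫ = 0 := horth 0 1 (by decide)
  have h02 : ⟪εy, εwy⟫ = 0 := horth 0 2 (by decide)
  have h03 : ⟪εy, εwz⟫ = 0 := horth 0 3 (by decide)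
  have h04 : ⟪εy, U⟫ = 0 := horth 0 4 (by decide)
  have h12 : ⟪εz, εwy⟫ = 0 := horth 1 2 (by decide)
  have h13 : ⟪εz, εwz⟫ = 0 := horth 1 3 (by decide)
  have h14 : ⟪εz, U⟫ = 0 := horth 1 4 (by decide)
  have h23 : ⟪εwy, εwz⟫ = 0 := horth 2 3 (by decide)
  have h24 : ⟪εwy, U⟫ = 0 := horth 2 4 (by decide)
  have h34 : ⟪εwz, U⟫ = 0 := horth 3 4 (by decide)
  -- εy and εwy are orthogonal to Z and WZ
  have hεyWZ : ⟪εy, WZ⟫ = 0 := by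
    rw [hWZ]; simp [inner_add_right, real_inner_smul_right, h03, h04]
  have hεyZ : ⟪εy, Z⟫ = 0 := by
    rw [hZ]
    simp [inner_add_right, real_inner_smul_right, h01, h04, hεyWZ]
  have hεwyWZ : ⟪εwy, WZ⟫ = 0 := by
    rw [hWZ]; simp [inner_add_right, real_inner_smul_right, h23, h24]
  have h21 : ⟪εwy, εz⟫ = 0 := horth 2 1 (by decide)
  have hεwyZ : ⟪εwy, Z⟫ = 0 := by
    rw [hZ]
    simp [inner_add_right, real_inner_smul_right, h21, h24, hεwyWZ]
  -- projection facts
  have hmem : Why ∈ span ℝ ({Z, WZ} : Set H) := hWhy ▸ projSpan_mem _ _ _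
  obtain ⟨a, b, hab⟩ := Submodule.mem_span_pair.mp hmem
  have horthp : WY - Why ∈ (span ℝ ({Z, WZ} : Set H))ᗮ := hWhy ▸ projSpan_orth _ _ _
  have hpZ : ⟪WY - Why, Z⟫ = 0 := by
    rw [real_inner_comm]
    exact horthp Z (subset_span (by simp))
  have hpWZ : ⟪WY - Why, WZ⟫ = 0 := by
    rw [real_inner_comm]
    exact horthp WZ (subset_span (by simp))
  -- αu • U - Why is orthogonal to Z, WZ and Why
  have hkey : αu • U - Why = (WY - Why) - εwy := by
    rw [hWY]; module
  have hUZ : ⟪αu • U - Why, Z⟫ = 0 := by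
    rw [hkey, inner_sub_left, hpZ, hεwyZ, sub_zero]
  have hUWZ : ⟪αu • U - Why, WZ⟫ = 0 := by
    rw [hkey, inner_sub_left, hpWZ, hεwyWZ, sub_zero]
  have hWhyOrth : ∀ X : H, ⟪X, Z⟫ = 0 → ⟪X, WZ⟫ = 0 → ⟪X, Why⟫ = 0 := by
    intro X hX1 hX2
    rw [← hab, inner_add_right, real_inner_smul_right, real_inner_smul_right, hX1, hX2]
    ring
  have hUWhy : ⟪αu • U - Why, Why⟫ = 0 := hWhyOrth _ hUZ hUWZ
  have hεyWhy : ⟪εy, Why⟫ = 0 := hWhyOrth _ hεyZ hεyWZ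
  have hεwyWhy : ⟪εwy, Why⟫ = 0 := hWhyOrth _ hεwyZ hεwyWZ
  -- the residual with coefficient τ and c0
  set c0 : ℝ := (βu + βwy * αu) / αu with hc0
  have hR : Y - (τ • Z + c0 • Why) = c0 • (αu • U - Why) + βwy • εwy + εy := by
    rw [hY, hWY, hc0]
    match_scalars <;> field_simp <;> ring
  have hRZ : ⟪Y - (τ • Z + c0 • Why), Z⟫ = 0 := by
    rw [hR, inner_add_left, inner_add_left, real_inner_smul_left, real_inner_smul_left,
      hUZ, hεwyZ, hεyZ]
    ring
  have hRW : ⟪Y - (τ • Z + c0 • Why), Why⟫ = 0 := by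
    rw [hR, inner_add_left, inner_add_left, real_inner_smul_left, real_inner_smul_left,
      hUWhy, hεwyWhy, hεyWhy]
    ring
  -- uniqueness
  have hveq : (t - τ) • Z + (c - c0) • Why
      = (Y - (τ • Z + c0 • Why)) - (Y - (t • Z + c • Why)) := by
    module
  have hdZ : ⟪(t - τ) • Z + (c - c0) • Why, Z⟫ = 0 := by
    rw [hveq, inner_sub_left, hRZ, hZeq]; ring
  have hdW : ⟪(t - τ) • Z + (c - c0) • Why, Why⟫ = 0 := by
    rw [hveq, inner_sub_left, hRW, hWeq]; ring
  have hvv : ⟪(t - τ) • Z + (c - c0) • Why, (t - τ) • Z + (c - c0) • Why⟫ = (0 : ℝ) := by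
    rw [inner_add_right, real_inner_smul_right, real_inner_smul_right, hdZ, hdW]
    ring
  have hv0 : (t - τ) • Z + (c - c0) • Why = 0 := inner_self_eq_zero.mp hvv
  obtain ⟨h1, _⟩ := LinearIndependent.pair_iff.mp hli (t - τ) (c - c0) hv0
  linarith
end

section
/- Under the same structural model, if β_u γ_u = 0 (either unconfounded treatment or unconfounded outcome), then the selection-on-observables estimand τ_soo — the population coefficient on Z in the linear regression of Y on (Z, W_Z, W_Y) — satisfies τ_soo = τ. -/
open Submodule RealInnerProductSpace

/-- Uniqueness of regression coefficients under linear independence of regressors. -/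
lemma aux_unique_soo {H : Type*} [NormedAddCommGroup H] [InnerProductSpace ℝ H]
    (Y Z WZ WY : H) (hli : LinearIndependent ℝ ![Z, WZ, WY])
    {t a b s A B : ℝ}
    (h1 : ⟪Y - (t • Z + a • WZ + b • WY), Z⟫ = 0)
    (h2 : ⟪Y - (t • Z + a • WZ + b • WY), WZ⟫ = 0)
    (h3 : ⟪Y - (t • Z + a • WZ + b • WY), WY⟫ = 0)
    (g1 : ⟪Y - (s • Z + A • WZ + B • WY), Z⟫ = 0)
    (g2 : ⟪Y - (s • Z + A • WZ + B • WY), WZ⟫ = 0)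
    (g3 : ⟪Y - (s • Z + A • WZ + B • WY), WY⟫ = 0) : t = s := by
  set D : H := (t - s) • Z + (a - A) • WZ + (b - B) • WY with hD
  have hDeq : D = (Y - (s • Z + A • WZ + B • WY)) - (Y - (t • Z + a • WZ + b • WY)) := by
    rw [hD]; module
  have dZ : ⟪D, Z⟫ = 0 := by rw [hDeq, inner_sub_left, g1, h1]; ring
  have dWZ : ⟪D, WZ⟫ = 0 := by rw [hDeq, inner_sub_left, g2, h2]; ring
  have dWY : ⟪D, WY⟫ = 0 := by rw [hDeq, inner_sub_left, g3, h3]; ring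
  have hDD : ⟪D, D⟫ = 0 := by
    nth_rewrite 2 [hD]
    rw [inner_add_right, inner_add_right, real_inner_smul_right, real_inner_smul_right,
      real_inner_smul_right, dZ, dWZ, dWY]; ring
  have hD0 : D = 0 := inner_self_eq_zero.mp hDD
  have hsum : ∑ i : Fin 3, (![t - s, a - A, b - B]) i • (![Z, WZ, WY]) i = 0 := by
    rw [Fin.sum_univ_three]
    simpa using hD0
  have := Fintype.linearIndependent_iff.mp hli _ hsum 0
  simp at this
  linarith

/-- Proposition 1 (SOO validity). In the structural model (random variables as vectors in a
real Hilbert space, inner product = covariance), if `β_u γ_u = 0` (either unconfounded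
treatment or unconfounded outcome), then the coefficient on `Z` in the population linear
regression of `Y` on `(Z, W_Z, W_Y)` — characterized by the normal equations, with the
covariance matrix of `(Z, W_Z, W_Y)` invertible, i.e. the regressors linearly
independent — equals `τ`. -/
theorem stmt_5 {H : Type*} [NormedAddCommGroup H] [InnerProductSpace ℝ H] [CompleteSpace H]
    (Y Z WZ WY U εy εz εwy εwz : H)
    (τ βu βwy βwz γu γwy γwz αu αwz φu : ℝ)
    (hY : Y = βu • U + βwy • WY + βwz • WZ + τ • Z + εy)
    (hZ : Z = γu • U + γwy • WY + γwz • WZ + εz)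
    (hWY : WY = αu • U + αwz • WZ + εwy)
    (hWZ : WZ = φu • U + εwz)
    (horth : ∀ i j : Fin 5, i ≠ j →
      ⟪(![εy, εz, εwy, εwz, U]) i, (![εy, εz, εwy, εwz, U]) j⟫ = 0)
    (hpos : ∀ i : Fin 5, 0 < ⟪(![εy, εz, εwy, εwz, U]) i, (![εy, εz, εwy, εwz, U]) i⟫)
    (hsoo : βu * γu = 0)
    (hli : LinearIndependent ℝ ![Z, WZ, WY]) :
    ∀ t a b : ℝ,
      ⟪Y - (t • Z + a • WZ + b • WY), Z⟫ = 0 →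
      ⟪Y - (t • Z + a • WZ + b • WY), WZ⟫ = 0 →
      ⟪Y - (t • Z + a • WZ + b • WY), WY⟫ = 0 →
      t = τ := by
  intro t a b h1 h2 h3
  -- pairwise orthogonality facts
  have o_yz : ⟪εy, εz⟫ = 0 := horth 0 1 (by decide)
  have o_y_wy : ⟪εy, εwy⟫ = 0 := horth 0 2 (by decide)
  have o_y_wz : ⟪εy, εwz⟫ = 0 := horth 0 3 (by decide)
  have o_yU : ⟪εy, U⟫ = 0 := horth 0 4 (by decide)
  have o_z_wy : ⟪εz, εwy⟫ = 0 := horth 1 2 (by decide)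
  have o_z_wz : ⟪εz, εwz⟫ = 0 := horth 1 3 (by decide)
  have o_zU : ⟪εz, U⟫ = 0 := horth 1 4 (by decide)
  have o_wy_wz : ⟪εwy, εwz⟫ = 0 := horth 2 3 (by decide)
  have o_wyU : ⟪εwy, U⟫ = 0 := horth 2 4 (by decide)
  have o_wzU : ⟪εwz, U⟫ = 0 := horth 3 4 (by decide)
  -- reversed versions
  have o_Uz : ⟪U, εz⟫ = 0 := by rw [real_inner_comm]; exact o_zU
  have o_wz_z : ⟪εwz, εz⟫ = 0 := by rw [real_inner_comm]; exact o_z_wz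
  have o_wy_z : ⟪εwy, εz⟫ = 0 := by rw [real_inner_comm]; exact o_z_wy
  -- derived: things orthogonal to εz
  have hWZ_ez : ⟪WZ, εz⟫ = 0 := by
    rw [hWZ]; simp [inner_add_left, real_inner_smul_left, o_Uz, o_wz_z]
  have hWY_ez : ⟪WY, εz⟫ = 0 := by
    rw [hWY, hWZ]
    simp [inner_add_left, real_inner_smul_left, o_Uz, o_wz_z, o_wy_z]
  -- εy is orthogonal to Z, WZ, WY
  have hey_WZ : ⟪εy, WZ⟫ = 0 := by
    rw [hWZ]; simp [inner_add_right, real_inner_smul_right, o_yU, o_y_wz]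
  have hey_WY : ⟪εy, WY⟫ = 0 := by
    rw [hWY, hWZ]
    simp [inner_add_right, real_inner_smul_right, o_yU, o_y_wz, o_y_wy]
  have hey_Z : ⟪εy, Z⟫ = 0 := by
    rw [hZ, hWY, hWZ]
    simp [inner_add_right, real_inner_smul_right, o_yU, o_y_wz, o_y_wy, o_yz]
  rcases mul_eq_zero.mp hsoo with hb | hg
  · -- unconfounded outcome: βu = 0, residual is εy
    have hres : Y - (τ • Z + βwz • WZ + βwy • WY) = εy := by
      rw [hY, hb]; module
    have g1 : ⟪Y - (τ • Z + βwz • WZ + βwy • WY), Z⟫ = 0 := by rw [hres]; exact hey_Z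
    have g2 : ⟪Y - (τ • Z + βwz • WZ + βwy • WY), WZ⟫ = 0 := by rw [hres]; exact hey_WZ
    have g3 : ⟪Y - (τ • Z + βwz • WZ + βwy • WY), WY⟫ = 0 := by rw [hres]; exact hey_WY
    exact aux_unique_soo Y Z WZ WY hli h1 h2 h3 g1 g2 g3
  · -- unconfounded treatment: γu = 0
    set K : Submodule ℝ H := Submodule.span ℝ ({WZ, WY} : Set H) with hK
    haveI : FiniteDimensional ℝ K := by
      apply FiniteDimensional.span_of_finite
      exact Set.toFinite _
    have hWZK : WZ ∈ K := subset_span (by simp)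
    have hWYK : WY ∈ K := subset_span (by simp)
    have hperp : βu • U + εy - ((orthogonalProjection K (βu • U + εy) : K) : H) ∈ Kᗮ :=
      sub_starProjection_mem_orthogonal (K := K) (βu • U + εy)
    have hpK : ((orthogonalProjection K (βu • U + εy) : K) : H) ∈ span ℝ ({WZ, WY} : Set H) :=
      (orthogonalProjection K (βu • U + εy)).2
    obtain ⟨A', B', hp⟩ := Submodule.mem_span_pair.mp hpK
    rw [← hp] at hperp
    have g2' : ⟪βu • U + εy - (A' • WZ + B' • WY), WZ⟫ = 0 := by
      rw [real_inner_comm]; exact Submodule.inner_right_of_mem_orthogonal hWZK hperp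
    have g3' : ⟪βu • U + εy - (A' • WZ + B' • WY), WY⟫ = 0 := by
      rw [real_inner_comm]; exact Submodule.inner_right_of_mem_orthogonal hWYK hperp
    have rez : ⟪βu • U + εy - (A' • WZ + B' • WY), εz⟫ = 0 := by
      simp [inner_sub_left, inner_add_left, real_inner_smul_left, o_Uz, o_yz, hWZ_ez, hWY_ez]
    have gZ : ⟪βu • U + εy - (A' • WZ + B' • WY), Z⟫ = 0 := by
      rw [hZ, hg]
      simp only [zero_smul, zero_add, inner_add_right, real_inner_smul_right, g2', g3', rez]
      ring
    have hres : Y - (τ • Z + (βwz + A') • WZ + (βwy + B') • WY)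
        = βu • U + εy - (A' • WZ + B' • WY) := by
      rw [hY]; module
    have g1 : ⟪Y - (τ • Z + (βwz + A') • WZ + (βwy + B') • WY), Z⟫ = 0 := by
      rw [hres]; exact gZ
    have g2 : ⟪Y - (τ • Z + (βwz + A') • WZ + (βwy + B') • WY), WZ⟫ = 0 := by
      rw [hres]; exact g2'
    have g3 : ⟪Y - (τ • Z + (βwz + A') • WZ + (βwy + B') • WY), WY⟫ = 0 := by
      rw [hres]; exact g3'
    exact aux_unique_soo Y Z WZ WY hli h1 h2 h3 g1 g2 g3
end

section
/- Let Σ be a 5×5 symmetric positive-definite matrix indexed by (Y, Z, W_Z, W_Y, U) with Σ_{UU} = 1. The map sending Σ to the four partial correlations ρ = (R_{U∼W_Z}, R_{U∼W_Y|W_Z}, R_{U∼Z|W_Y,W_Z}, R_{U∼Y|Z,W_Z,W_Y}) — holding the 4×4 submatrix of (Y,Z,W_Z,W_Y) fixed — is a bijection between positive-definite completions of Σ with Σ_{UU}=1 and the open cube (−1,1)⁴. -/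
open scoped Matrix

/-- Partial covariance `Cov(a, b ∣ s)` computed from a covariance matrix `M`:
`M a b − M_{a,s} (M_{s,s})⁻¹ M_{s,b}`. -/
noncomputable def pcov (M : Matrix (Fin 5) (Fin 5) ℝ) (a b : Fin 5)
    (s : Finset (Fin 5)) : ℝ :=
  M a b - dotProduct (fun i : {x // x ∈ s} => M a i)
    ((M.submatrix (Subtype.val : {x // x ∈ s} → Fin 5) Subtype.val)⁻¹.mulVec
      (fun j : {x // x ∈ s} => M j b))

/-- Partial correlation `R_{a∼b|s}` computed from a covariance matrix `M`. -/
noncomputable def pcorr (M : Matrix (Fin 5) (Fin 5) ℝ) (a b : Fin 5)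
    (s : Finset (Fin 5)) : ℝ :=
  pcov M a b s / Real.sqrt (pcov M a a s * pcov M b b s)

/-- The 5×5 covariance matrix of `(Y, Z, W_Z, W_Y, U)` (indices `0,1,2,3,4`) obtained by
completing the fixed 4×4 block `S0` of `(Y, Z, W_Z, W_Y)` with `Cov(U, ·) = v` and
`Var(U) = 1`. -/
noncomputable def fullCov (S0 : Matrix (Fin 4) (Fin 4) ℝ) (v : Fin 4 → ℝ) :
    Matrix (Fin 5) (Fin 5) ℝ := fun i j =>
  if hi : (i : ℕ) < 4 then
    if hj : (j : ℕ) < 4 then S0 ⟨i, hi⟩ ⟨j, hj⟩ else v ⟨i, hi⟩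
  else
    if hj : (j : ℕ) < 4 then v ⟨j, hj⟩ else 1

/-- The vector of partial correlations
`ρ = (R_{U∼W_Z}, R_{U∼W_Y|W_Z}, R_{U∼Z|W_Y,W_Z}, R_{U∼Y|Z,W_Z,W_Y})` of a completion. -/
noncomputable def rhoMap (M : Matrix (Fin 5) (Fin 5) ℝ) : Fin 4 → ℝ :=
  ![pcorr M 4 2 ∅, pcorr M 4 3 {2}, pcorr M 4 1 {3, 2}, pcorr M 4 0 {1, 2, 3}]

set_option maxHeartbeats 1000000

open Matrix

namespace LKJaux

variable {m n : Type*} [Fintype m] [Fintype n] [DecidableEq m] [DecidableEq n]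


theorem posDef_submatrix_inj {M : Matrix n n ℝ} (hM : M.PosDef) {f : m → n}
    (hf : Function.Injective f) : (M.submatrix f f).PosDef := by
  refine posDef_iff_dotProduct_mulVec.mpr ⟨?_, fun x hx => ?_⟩
  · ext i j
    simp only [Matrix.conjTranspose_apply, Matrix.submatrix_apply, star_trivial]
    exact hM.1.apply (f i) (f j)
  · classical
    set y : n → ℝ := fun j => ∑ i, if f i = j then x i else 0 with hy
    have hyv : ∀ i, y (f i) = x i := by
      intro i
      simp only [hy]
      rw [Finset.sum_eq_single i (fun b _ hb => by simp [hf.ne hb]) (by simp)]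
      simp
    have hy0 : y ≠ 0 := by
      obtain ⟨i, hi⟩ := Function.ne_iff.1 hx
      intro h
      exact hi (by simpa [hyv i] using congrFun h (f i))
    have key : star x ⬝ᵥ (M.submatrix f f) *ᵥ x = star y ⬝ᵥ M *ᵥ y := by
      simp only [dotProduct, Matrix.mulVec, Matrix.submatrix_apply, star_trivial, hy]
      have T : ∀ j, (∑ k : n, M j k * ∑ i, if f i = k then x i else 0)
          = ∑ i, M j (f i) * x i := by
        intro j
        simp only [Finset.mul_sum]
        rw [Finset.sum_comm]
        simp [mul_ite, Finset.sum_ite_eq]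
      simp only [T]
      simp only [Finset.sum_mul]
      rw [Finset.sum_comm]
      simp [ite_mul, Finset.sum_ite_eq]
    rw [key]
    exact hM.dotProduct_mulVec_pos hy0

theorem posDef_submatrix_equiv {M : Matrix n n ℝ} (e : m ≃ n) :
    (M.submatrix e e).PosDef ↔ M.PosDef := by
  constructor
  · intro h
    have := posDef_submatrix_inj h (f := e.symm) e.symm.injective
    simpa [Matrix.submatrix_submatrix, Function.comp] using this
  · intro h
    exact posDef_submatrix_inj h e.injective

theorem posDef_fin_two {a b d : ℝ} :
    (!![a, b; b, d]).PosDef ↔ 0 < a ∧ 0 < a * d - b ^ 2 := by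
  constructor
  · intro h
    have h1 := h.dotProduct_mulVec_pos (x := ![1, 0]) (fun hc => by simpa using congrFun hc 0)
    have ha : 0 < a := by
      simpa [dotProduct, Matrix.mulVec, Fin.sum_univ_two] using h1
    have h2 := h.dotProduct_mulVec_pos (x := ![-b, a]) (fun hc => by
      have := congrFun hc 1
      simp at this
      exact absurd this (ne_of_gt ha))
    simp [dotProduct, Matrix.mulVec, Fin.sum_univ_two] at h2
    refine ⟨ha, ?_⟩
    nlinarith
  · rintro ⟨ha, hd⟩
    rw [posDef_iff_dotProduct_mulVec]; constructor
    · ext i j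
      fin_cases i <;> fin_cases j <;> simp
    · intro x hx
      have hx01 : x 0 ≠ 0 ∨ x 1 ≠ 0 := by
        by_contra hc
        push_neg at hc
        exact hx (funext fun i => by fin_cases i <;> simp [hc.1, hc.2])
      simp only [dotProduct, Matrix.mulVec, Fin.sum_univ_two, star_trivial,
        Matrix.cons_val_zero, Matrix.cons_val_one, Matrix.head_cons, Matrix.of_apply,
        Matrix.cons_val', Matrix.empty_val', Matrix.cons_val_fin_one, Pi.zero_apply, Matrix.vecHead, Matrix.vecTail]
      have hd' : 0 < d := by nlinarith [sq_nonneg b]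
      rcases hx01 with h0 | h1
      · nlinarith [sq_nonneg (b * x 0 + d * x 1), mul_pos hd (mul_self_pos.2 h0), sq_nonneg (x 1)]
      · nlinarith [sq_nonneg (a * x 0 + b * x 1), mul_pos hd (mul_self_pos.2 h1), sq_nonneg (x 0)]

theorem posDef_fromBlocks₁₁ {A : Matrix m m ℝ} (B : Matrix m n ℝ) (D : Matrix n n ℝ)
    (hA : A.PosDef) [Invertible A] :
    (Matrix.fromBlocks A B Bᴴ D).PosDef ↔ (D - Bᴴ * A⁻¹ * B).PosDef := by
  constructor
  · intro h
    refine posDef_iff_dotProduct_mulVec.mpr ⟨(Matrix.IsHermitian.fromBlocks₁₁ B D hA.1).1 h.1, fun y hy => ?_⟩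
    have hx : (-((A⁻¹ * B) *ᵥ y) ⊕ᵥ y) ≠ 0 := by
      intro hc
      apply hy
      ext i
      simpa using congrFun hc (Sum.inr i)
    have := h.dotProduct_mulVec_pos hx
    rwa [Matrix.dotProduct_mulVec, Matrix.schur_complement_eq₁₁ B D _ _ hA.1,
      neg_add_cancel, dotProduct_zero, zero_add, ← Matrix.dotProduct_mulVec] at this
  · intro h
    refine posDef_iff_dotProduct_mulVec.mpr ⟨(Matrix.IsHermitian.fromBlocks₁₁ B D hA.1).2 h.1, fun z hz => ?_⟩
    rw [Matrix.dotProduct_mulVec, ← Sum.elim_comp_inl_inr z,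
      Matrix.schur_complement_eq₁₁ B D _ _ hA.1]
    by_cases hzr : z ∘ Sum.inr = 0
    · have hzl : z ∘ Sum.inl ≠ 0 := by
        intro hc
        apply hz
        ext i
        cases i with
        | inl i => exact congrFun hc i
        | inr i => exact congrFun hzr i
      have h2 : star (z ∘ Sum.inr) ᵥ* (D - Bᴴ * A⁻¹ * B) ⬝ᵥ (z ∘ Sum.inr) = 0 := by
        rw [hzr]; simp
      rw [h2, add_zero, hzr, Matrix.mulVec_zero, add_zero, ← Matrix.dotProduct_mulVec]
      exact hA.dotProduct_mulVec_pos hzl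
    · have h1 : (0:ℝ) ≤ star (z ∘ Sum.inl + (A⁻¹ * B) *ᵥ (z ∘ Sum.inr)) ᵥ*
          A ⬝ᵥ (z ∘ Sum.inl + (A⁻¹ * B) *ᵥ (z ∘ Sum.inr)) := by
        rw [← Matrix.dotProduct_mulVec]
        exact hA.posSemidef.dotProduct_mulVec_nonneg _
      have h2 : 0 < star (z ∘ Sum.inr) ᵥ* (D - Bᴴ * A⁻¹ * B) ⬝ᵥ (z ∘ Sum.inr) := by
        rw [← Matrix.dotProduct_mulVec]
        exact h.dotProduct_mulVec_pos hzr
      linarith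

end LKJaux

namespace LKJ
open Matrix

theorem pcov_eval {k : ℕ} (M : Matrix (Fin 5) (Fin 5) ℝ) (a b : Fin 5)
    (s : Finset (Fin 5)) (e : Fin k ≃ {x // x ∈ s}) :
    pcov M a b s = M a b -
      dotProduct (fun i : Fin k => M a (e i).1)
        ((M.submatrix (fun i : Fin k => (e i).1) (fun j : Fin k => (e j).1))⁻¹.mulVec
          (fun j : Fin k => M (e j).1 b)) := by
  unfold pcov
  have hsub : M.submatrix (fun i : Fin k => (e i).1) (fun j : Fin k => (e j).1)
      = (M.submatrix (Subtype.val : {x // x ∈ s} → Fin 5) Subtype.val).submatrix e e := by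
    ext i j; simp [Matrix.submatrix_apply]
  rw [hsub, Matrix.inv_submatrix_equiv]
  congr 1
  simp only [dotProduct, Matrix.mulVec, Matrix.submatrix_apply]
  rw [← Equiv.sum_comp e (fun i => M a i.1 * ∑ j, (M.submatrix Subtype.val Subtype.val)⁻¹ i j * M j.1 b)]
  refine Finset.sum_congr rfl fun i _ => ?_
  congr 1
  rw [← Equiv.sum_comp e (fun j => (M.submatrix Subtype.val Subtype.val)⁻¹ (e i) j * M j.1 b)]

theorem pcov_empty (M : Matrix (Fin 5) (Fin 5) ℝ) (a b : Fin 5) :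
    pcov M a b ∅ = M a b := by
  have : IsEmpty {x // x ∈ (∅ : Finset (Fin 5))} := by simp [Finset.isEmpty_coe_sort]; exact ⟨fun x => x.2⟩
  simp [pcov, dotProduct]

def em1 : Fin 1 ≃ {x // x ∈ ({2} : Finset (Fin 5))} :=
  ⟨fun _ => ⟨2, by decide⟩, fun _ => 0, by decide, by decide⟩

def em2 : Fin 2 ≃ {x // x ∈ ({3, 2} : Finset (Fin 5))} :=
  ⟨![⟨2, by decide⟩, ⟨3, by decide⟩], fun x => if x.1 = 2 then 0 else 1, by decide, by decide⟩

def em3 : Fin 3 ≃ {x // x ∈ ({1, 2, 3} : Finset (Fin 5))} :=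
  ⟨![⟨1, by decide⟩, ⟨2, by decide⟩, ⟨3, by decide⟩],
   fun x => if x.1 = 1 then 0 else if x.1 = 2 then 1 else 2, by decide, by decide⟩

theorem em1v0 : ((em1 0).1 : Fin 5) = 2 := rfl
theorem em2v0 : ((em2 0).1 : Fin 5) = 2 := rfl
theorem em2v1 : ((em2 1).1 : Fin 5) = 3 := rfl
theorem em3v0 : ((em3 0).1 : Fin 5) = 1 := rfl
theorem em3v1 : ((em3 1).1 : Fin 5) = 2 := rfl
theorem em3v2 : ((em3 2).1 : Fin 5) = 3 := rfl

section EV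


variable (S : Matrix (Fin 4) (Fin 4) ℝ) (v : Fin 4 → ℝ)

noncomputable def dG : ℝ := S 2 2 * S 3 3 - S 2 3 ^ 2
noncomputable def dH : ℝ := 0 - S 1 3 ^ 2 * S 2 2 + 2 * S 1 2 * S 1 3 * S 2 3 - S 1 2 ^ 2 * S 3 3 - S 1 1 * S 2 3 ^ 2 + S 1 1 * S 2 2 * S 3 3
noncomputable def dS4 : ℝ := 0 + S 0 3 ^ 2 * S 1 2 ^ 2 - S 0 3 ^ 2 * S 1 1 * S 2 2 - 2 * S 0 2 * S 0 3 * S 1 2 * S 1 3 + 2 * S 0 2 * S 0 3 * S 1 1 * S 2 3 + S 0 2 ^ 2 * S 1 3 ^ 2 - S 0 2 ^ 2 * S 1 1 * S 3 3 + 2 * S 0 1 * S 0 3 * S 1 3 * S 2 2 - 2 * S 0 1 * S 0 3 * S 1 2 * S 2 3 - 2 * S 0 1 * S 0 2 * S 1 3 * S 2 3 + 2 * S 0 1 * S 0 2 * S 1 2 * S 3 3 + S 0 1 ^ 2 * S 2 3 ^ 2 - S 0 1 ^ 2 * S 2 2 * S 3 3 - S 0 0 * S 1 3 ^ 2 * S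 2 2 + 2 * S 0 0 * S 1 2 * S 1 3 * S 2 3 - S 0 0 * S 1 2 ^ 2 * S 3 3 - S 0 0 * S 1 1 * S 2 3 ^ 2 + S 0 0 * S 1 1 * S 2 2 * S 3 3
noncomputable def E0 : ℝ := S 2 2
noncomputable def E1 : ℝ := dG S / S 2 2
noncomputable def E2 : ℝ := dH S / dG S
noncomputable def E3 : ℝ := dS4 S / dH S
noncomputable def C0 : ℝ := v 2
noncomputable def C1 : ℝ := v 3 - S 2 3 * v 2 / S 2 2
noncomputable def C2 : ℝ := v 1 - (0 - S 1 3 * S 2 3 * v 2 + S 1 3 * S 2 2 * v 3 + S 1 2 * S 3 3 * v 2 - S 1 2 * S 2 3 * v 3) / dG S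
noncomputable def C3 : ℝ := v 0 - (0 - S 0 3 * S 1 3 * S 2 2 * v 1 + S 0 3 * S 1 2 * S 2 3 * v 1 + S 0 3 * S 1 2 * S 1 3 * v 2 - S 0 3 * S 1 2 ^ 2 * v 3 - S 0 3 * S 1 1 * S 2 3 * v 2 + S 0 3 * S 1 1 * S 2 2 * v 3 + S 0 2 * S 1 3 * S 2 3 * v 1 - S 0 2 * S 1 3 ^ 2 * v 2 - S 0 2 * S 1 2 * S 3 3 * v 1 + S 0 2 * S 1 2 * S 1 3 * v 3 + S 0 2 * S 1 1 * S 3 3 * v 2 - S 0 2 * S 1 1 * S 2 3 * v 3 - S 0 1 * S 2 3 ^ 2 * v 1 + S 0 1 * S 2 2 * S 3 3 * v 1 + S 0 1 * S 1 3 * S 2 3 * v 2 - S 0 1 * S 1 3 * S 2 2 * v 3 - S 0 1 * S 1 2 * S 3 3 * v 2 + S 0 1 * S 1 2 * S 2 3 * v 3) / dH S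
noncomputable def D0 : ℝ := 1
noncomputable def D1 : ℝ := 1 - v 2 ^ 2 / S 2 2
noncomputable def D2 : ℝ := 1 - (0 + S 3 3 * v 2 ^ 2 - 2 * S 2 3 * v 2 * v 3 + S 2 2 * v 3 ^ 2) / dG S
noncomputable def D3 : ℝ := 1 - (0 - S 2 3 ^ 2 * v 1 ^ 2 + S 2 2 * S 3 3 * v 1 ^ 2 + 2 * S 1 3 * S 2 3 * v 1 * v 2 - 2 * S 1 3 * S 2 2 * v 1 * v 3 - S 1 3 ^ 2 * v 2 ^ 2 - 2 * S 1 2 * S 3 3 * v 1 * v 2 + 2 * S 1 2 * S 2 3 * v 1 * v 3 + 2 * S 1 2 * S 1 3 * v 2 * v 3 - S 1 2 ^ 2 * v 3 ^ 2 + S 1 1 * S 3 3 * v 2 ^ 2 - 2 * S 1 1 * S 2 3 * v 2 * v 3 + S 1 1 * S 2 2 * v 3 ^ 2) / dH S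
noncomputable def D4 : ℝ := D3 S v - (C3 S v) ^ 2 / E3 S

theorem fc00 : fullCov S v 0 0 = S 0 0 := rfl
theorem fc01 : fullCov S v 0 1 = S 0 1 := rfl
theorem fc02 : fullCov S v 0 2 = S 0 2 := rfl
theorem fc03 : fullCov S v 0 3 = S 0 3 := rfl
theorem fc04 : fullCov S v 0 4 = v 0 := rfl
theorem fc10 : fullCov S v 1 0 = S 1 0 := rfl
theorem fc11 : fullCov S v 1 1 = S 1 1 := rfl
theorem fc12 : fullCov S v 1 2 = S 1 2 := rfl
theorem fc13 : fullCov S v 1 3 = S 1 3 := rfl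
theorem fc14 : fullCov S v 1 4 = v 1 := rfl
theorem fc20 : fullCov S v 2 0 = S 2 0 := rfl
theorem fc21 : fullCov S v 2 1 = S 2 1 := rfl
theorem fc22 : fullCov S v 2 2 = S 2 2 := rfl
theorem fc23 : fullCov S v 2 3 = S 2 3 := rfl
theorem fc24 : fullCov S v 2 4 = v 2 := rfl
theorem fc30 : fullCov S v 3 0 = S 3 0 := rfl
theorem fc31 : fullCov S v 3 1 = S 3 1 := rfl
theorem fc32 : fullCov S v 3 2 = S 3 2 := rfl
theorem fc33 : fullCov S v 3 3 = S 3 3 := rfl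
theorem fc34 : fullCov S v 3 4 = v 3 := rfl
theorem fc40 : fullCov S v 4 0 = v 0 := rfl
theorem fc41 : fullCov S v 4 1 = v 1 := rfl
theorem fc42 : fullCov S v 4 2 = v 2 := rfl
theorem fc43 : fullCov S v 4 3 = v 3 := rfl
theorem fc44 : fullCov S v 4 4 = 1 := rfl



theorem inv2 (a b d g : ℝ) (hdef : a * d - b ^ 2 = g) (hg : g ≠ 0) :
    (!![a, b; b, d])⁻¹ = g⁻¹ • !![d, -b; -b, a] := by
  apply Matrix.inv_eq_right_inv
  rw [Matrix.mul_smul]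
  have key : (!![a, b; b, d] : Matrix (Fin 2) (Fin 2) ℝ) * !![d, -b; -b, a] = g • 1 := by
    ext i j
    fin_cases i <;> fin_cases j <;>
      simp [Matrix.mul_apply, Fin.sum_univ_two, Matrix.one_apply] <;>
      first | ring1 | linear_combination hdef
  rw [key, smul_smul, inv_mul_cancel₀ hg, one_smul]

theorem inv3 (a b c d e f g : ℝ)
    (hdef : a * (d * f - e ^ 2) - b * (b * f - c * e) + c * (b * e - c * d) = g)
    (hg : g ≠ 0) :
    (!![a, b, c; b, d, e; c, e, f])⁻¹ = g⁻¹ •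
      !![d * f - e ^ 2, c * e - b * f, b * e - c * d;
         c * e - b * f, a * f - c ^ 2, b * c - a * e;
         b * e - c * d, b * c - a * e, a * d - b ^ 2] := by
  apply Matrix.inv_eq_right_inv
  rw [Matrix.mul_smul]
  have key : (!![a, b, c; b, d, e; c, e, f] : Matrix (Fin 3) (Fin 3) ℝ) *
      !![d * f - e ^ 2, c * e - b * f, b * e - c * d;
         c * e - b * f, a * f - c ^ 2, b * c - a * e;
         b * e - c * d, b * c - a * e, a * d - b ^ 2] = g • 1 := by
    ext i j
    fin_cases i <;> fin_cases j <;>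
      simp [Matrix.mul_apply, Fin.sum_univ_three, Matrix.one_apply] <;>
      first | ring1 | linear_combination hdef
  rw [key, smul_smul, inv_mul_cancel₀ hg, one_smul]

theorem hA1 : (fullCov S v).submatrix (fun i : Fin 1 => ((em1 i).1 : Fin 5))
    (fun j : Fin 1 => (em1 j).1) = !![S 2 2] := by
  ext i j; fin_cases i <;> fin_cases j <;> rfl

theorem hA2 (hsym : ∀ i j, S j i = S i j) :
    (fullCov S v).submatrix (fun i : Fin 2 => ((em2 i).1 : Fin 5))
    (fun j : Fin 2 => (em2 j).1) = !![S 2 2, S 2 3; S 2 3, S 3 3] := by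
  ext i j
  fin_cases i <;> fin_cases j <;> first | rfl | exact hsym 2 3

theorem hA3 (hsym : ∀ i j, S j i = S i j) :
    (fullCov S v).submatrix (fun i : Fin 3 => ((em3 i).1 : Fin 5))
    (fun j : Fin 3 => (em3 j).1)
    = !![S 1 1, S 1 2, S 1 3; S 1 2, S 2 2, S 2 3; S 1 3, S 2 3, S 3 3] := by
  ext i j
  fin_cases i <;> fin_cases j <;>
    first | rfl | exact hsym 1 2 | exact hsym 1 3 | exact hsym 2 3

theorem ev_C1 (h22 : S 2 2 ≠ 0) : pcov (fullCov S v) 4 3 {2} = C1 S v := by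
  rw [pcov_eval _ _ _ _ em1, hA1, Matrix.inv_def, Matrix.adjugate_fin_one,
    Matrix.det_fin_one, Ring.inverse_eq_inv']
  simp only [Fin.sum_univ_one, dotProduct, Matrix.mulVec, Matrix.smul_apply, smul_eq_mul, Matrix.cons_val_zero, Matrix.cons_val_one, Matrix.head_cons, Matrix.of_apply, Matrix.cons_val', Matrix.empty_val', Matrix.cons_val_fin_one, Matrix.head_fin_const, Matrix.vecHead, Matrix.vecTail, em1v0, em2v0, em2v1, em3v0, em3v1, em3v2, fc40, fc41, fc42, fc43, fc44, fc00, fc01, fc02, fc03, fc04, fc10, fc11, fc12, fc13, fc14, fc20, fc21, fc22, fc23, fc24, fc30, fc31, fc32, fc33, fc34, Matrix.one_apply_eq]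
  rw [C1]
  field_simp

theorem ev_D1 (h22 : S 2 2 ≠ 0) : pcov (fullCov S v) 4 4 {2} = D1 S v := by
  rw [pcov_eval _ _ _ _ em1, hA1, Matrix.inv_def, Matrix.adjugate_fin_one,
    Matrix.det_fin_one, Ring.inverse_eq_inv']
  simp only [Fin.sum_univ_one, dotProduct, Matrix.mulVec, Matrix.smul_apply, smul_eq_mul, Matrix.cons_val_zero, Matrix.cons_val_one, Matrix.head_cons, Matrix.of_apply, Matrix.cons_val', Matrix.empty_val', Matrix.cons_val_fin_one, Matrix.head_fin_const, Matrix.vecHead, Matrix.vecTail, em1v0, em2v0, em2v1, em3v0, em3v1, em3v2, fc40, fc41, fc42, fc43, fc44, fc00, fc01, fc02, fc03, fc04, fc10, fc11, fc12, fc13, fc14, fc20, fc21, fc22, fc23, fc24, fc30, fc31, fc32, fc33, fc34, Matrix.one_apply_eq]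
  rw [D1]
  field_simp

theorem ev_E1 (hsym : ∀ i j, S j i = S i j) (h22 : S 2 2 ≠ 0) :
    pcov (fullCov S v) 3 3 {2} = E1 S := by
  rw [pcov_eval _ _ _ _ em1, hA1, Matrix.inv_def, Matrix.adjugate_fin_one,
    Matrix.det_fin_one, Ring.inverse_eq_inv']
  simp only [Fin.sum_univ_one, dotProduct, Matrix.mulVec, Matrix.smul_apply, smul_eq_mul, Matrix.cons_val_zero, Matrix.cons_val_one, Matrix.head_cons, Matrix.of_apply, Matrix.cons_val', Matrix.empty_val', Matrix.cons_val_fin_one, Matrix.head_fin_const, Matrix.vecHead, Matrix.vecTail, em1v0, em2v0, em2v1, em3v0, em3v1, em3v2, fc40, fc41, fc42, fc43, fc44, fc00, fc01, fc02, fc03, fc04, fc10, fc11, fc12, fc13, fc14, fc20, fc21, fc22, fc23, fc24, fc30, fc31, fc32, fc33, fc34, Matrix.one_apply_eq]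
  rw [E1, dG, hsym 2 3]
  field_simp

theorem ev_C2 (hsym : ∀ i j, S j i = S i j) (hg : dG S ≠ 0) :
    pcov (fullCov S v) 4 1 {3, 2} = C2 S v := by
  rw [pcov_eval _ _ _ _ em2, hA2 S v hsym,
    inv2 (S 2 2) (S 2 3) (S 3 3) (dG S) (by rw [dG]) hg]
  simp only [Fin.sum_univ_two, dotProduct, Matrix.mulVec, Matrix.smul_apply, smul_eq_mul, Matrix.cons_val_zero, Matrix.cons_val_one, Matrix.head_cons, Matrix.of_apply, Matrix.cons_val', Matrix.empty_val', Matrix.cons_val_fin_one, Matrix.head_fin_const, Matrix.vecHead, Matrix.vecTail, em1v0, em2v0, em2v1, em3v0, em3v1, em3v2, fc40, fc41, fc42, fc43, fc44, fc00, fc01, fc02, fc03, fc04, fc10, fc11, fc12, fc13, fc14, fc20, fc21, fc22, fc23, fc24, fc30, fc31, fc32, fc33, fc34]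
  rw [C2, hsym 1 2, hsym 1 3]
  field_simp
  try simp only [dG, dH]
  ring
theorem ev_D2 (hsym : ∀ i j, S j i = S i j) (hg : dG S ≠ 0) :
    pcov (fullCov S v) 4 4 {3, 2} = D2 S v := by
  rw [pcov_eval _ _ _ _ em2, hA2 S v hsym,
    inv2 (S 2 2) (S 2 3) (S 3 3) (dG S) (by rw [dG]) hg]
  simp only [Fin.sum_univ_two, dotProduct, Matrix.mulVec, Matrix.smul_apply, smul_eq_mul, Matrix.cons_val_zero, Matrix.cons_val_one, Matrix.head_cons, Matrix.of_apply, Matrix.cons_val', Matrix.empty_val', Matrix.cons_val_fin_one, Matrix.head_fin_const, Matrix.vecHead, Matrix.vecTail, em1v0, em2v0, em2v1, em3v0, em3v1, em3v2, fc40, fc41, fc42, fc43, fc44, fc00, fc01, fc02, fc03, fc04, fc10, fc11, fc12, fc13, fc14, fc20, fc21, fc22, fc23, fc24, fc30, fc31, fc32, fc33, fc34]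
  rw [D2]
  field_simp
  try simp only [dG, dH]
  ring
theorem ev_E2 (hsym : ∀ i j, S j i = S i j) (hg : dG S ≠ 0) :
    pcov (fullCov S v) 1 1 {3, 2} = E2 S := by
  rw [pcov_eval _ _ _ _ em2, hA2 S v hsym,
    inv2 (S 2 2) (S 2 3) (S 3 3) (dG S) (by rw [dG]) hg]
  simp only [Fin.sum_univ_two, dotProduct, Matrix.mulVec, Matrix.smul_apply, smul_eq_mul, Matrix.cons_val_zero, Matrix.cons_val_one, Matrix.head_cons, Matrix.of_apply, Matrix.cons_val', Matrix.empty_val', Matrix.cons_val_fin_one, Matrix.head_fin_const, Matrix.vecHead, Matrix.vecTail, em1v0, em2v0, em2v1, em3v0, em3v1, em3v2, fc40, fc41, fc42, fc43, fc44, fc00, fc01, fc02, fc03, fc04, fc10, fc11, fc12, fc13, fc14, fc20, fc21, fc22, fc23, fc24, fc30, fc31, fc32, fc33, fc34]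
  rw [E2, hsym 1 2, hsym 1 3]
  field_simp
  try simp only [dG, dH]
  ring
theorem ev_C3 (hsym : ∀ i j, S j i = S i j) (hh : dH S ≠ 0) :
    pcov (fullCov S v) 4 0 {1, 2, 3} = C3 S v := by
  rw [pcov_eval _ _ _ _ em3, hA3 S v hsym,
    inv3 (S 1 1) (S 1 2) (S 1 3) (S 2 2) (S 2 3) (S 3 3) (dH S) (by rw [dH]; ring) hh]
  simp only [Fin.sum_univ_three, Matrix.cons_val, Fin.zero_eta, Fin.mk_one, dotProduct, Matrix.mulVec, Matrix.smul_apply, smul_eq_mul, Matrix.cons_val_zero, Matrix.cons_val_one, Matrix.head_cons, Matrix.of_apply, Matrix.cons_val', Matrix.empty_val', Matrix.cons_val_fin_one, Matrix.head_fin_const, Matrix.vecHead, Matrix.vecTail, em1v0, em2v0, em2v1, em3v0, em3v1, em3v2, fc40, fc41, fc42, fc43, fc44, fc00, fc01, fc02, fc03, fc04, fc10, fc11, fc12, fc13, fc14, fc20, fc21, fc22, fc23, fc24, fc30, fc31, fc32, fc33, fc34]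
  rw [C3, hsym 0 1, hsym 0 2, hsym 0 3]
  field_simp
  try simp only [dG, dH, dS4]
  ring
theorem ev_D3 (hsym : ∀ i j, S j i = S i j) (hh : dH S ≠ 0) :
    pcov (fullCov S v) 4 4 {1, 2, 3} = D3 S v := by
  rw [pcov_eval _ _ _ _ em3, hA3 S v hsym,
    inv3 (S 1 1) (S 1 2) (S 1 3) (S 2 2) (S 2 3) (S 3 3) (dH S) (by rw [dH]; ring) hh]
  simp only [Fin.sum_univ_three, Matrix.cons_val, Fin.zero_eta, Fin.mk_one, dotProduct, Matrix.mulVec, Matrix.smul_apply, smul_eq_mul, Matrix.cons_val_zero, Matrix.cons_val_one, Matrix.head_cons, Matrix.of_apply, Matrix.cons_val', Matrix.empty_val', Matrix.cons_val_fin_one, Matrix.head_fin_const, Matrix.vecHead, Matrix.vecTail, em1v0, em2v0, em2v1, em3v0, em3v1, em3v2, fc40, fc41, fc42, fc43, fc44, fc00, fc01, fc02, fc03, fc04, fc10, fc11, fc12, fc13, fc14, fc20, fc21, fc22, fc23, fc24, fc30, fc31, fc32, fc33, fc34]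
  rw [D3]
  field_simp
  try simp only [dG, dH, dS4]
  ring
theorem ev_E3 (hsym : ∀ i j, S j i = S i j) (hh : dH S ≠ 0) :
    pcov (fullCov S v) 0 0 {1, 2, 3} = E3 S := by
  rw [pcov_eval _ _ _ _ em3, hA3 S v hsym,
    inv3 (S 1 1) (S 1 2) (S 1 3) (S 2 2) (S 2 3) (S 3 3) (dH S) (by rw [dH]; ring) hh]
  simp only [Fin.sum_univ_three, Matrix.cons_val, Fin.zero_eta, Fin.mk_one, dotProduct, Matrix.mulVec, Matrix.smul_apply, smul_eq_mul, Matrix.cons_val_zero, Matrix.cons_val_one, Matrix.head_cons, Matrix.of_apply, Matrix.cons_val', Matrix.empty_val', Matrix.cons_val_fin_one, Matrix.head_fin_const, Matrix.vecHead, Matrix.vecTail, em1v0, em2v0, em2v1, em3v0, em3v1, em3v2, fc40, fc41, fc42, fc43, fc44, fc00, fc01, fc02, fc03, fc04, fc10, fc11, fc12, fc13, fc14, fc20, fc21, fc22, fc23, fc24, fc30, fc31, fc32, fc33, fc34]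
  rw [E3, hsym 0 1, hsym 0 2, hsym 0 3]
  field_simp
  try simp only [dG, dH, dS4]
  ring
end EV


variable (S : Matrix (Fin 4) (Fin 4) ℝ) (v : Fin 4 → ℝ)

theorem ev_C0 : pcov (fullCov S v) 4 2 ∅ = C0 v := by rw [pcov_empty]; rfl
theorem ev_D0 : pcov (fullCov S v) 4 4 ∅ = D0 := by rw [pcov_empty]; rfl
theorem ev_E0 : pcov (fullCov S v) 2 2 ∅ = E0 S := by rw [pcov_empty]; rfl

theorem R2 (h22 : S 2 2 ≠ 0) (hg : dG S ≠ 0) :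
    D2 S v = D1 S v - (C1 S v) ^ 2 / E1 S := by
  have hE1 : dG S / S 2 2 ≠ 0 := div_ne_zero hg h22
  rw [D2, D1, C1, E1]
  field_simp
  simp only [dG]
  ring

theorem R3 (hg : dG S ≠ 0) (hh : dH S ≠ 0) :
    D3 S v = D2 S v - (C2 S v) ^ 2 / E2 S := by
  have hE2 : dH S / dG S ≠ 0 := div_ne_zero hh hg
  rw [D3, D2, C2, E2]
  field_simp
  simp only [dG, dH]
  ring

theorem det_eq (hsym : ∀ i j, S j i = S i j) : S.det = dS4 S := by
  rw [show S = !![S 0 0, S 0 1, S 0 2, S 0 3; S 0 1, S 1 1, S 1 2, S 1 3;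
      S 0 2, S 1 2, S 2 2, S 2 3; S 0 3, S 1 3, S 2 3, S 3 3] from by
    ext i j
    fin_cases i <;> fin_cases j <;>
      first | rfl | exact hsym 0 1 | exact hsym 0 2 | exact hsym 0 3 | exact hsym 1 2 |
        exact hsym 1 3 | exact hsym 2 3]
  rw [dS4]
  simp [Matrix.det_succ_row_zero, Fin.sum_univ_succ, Fin.succAbove]
  ring

theorem pos22 (hS0 : S.PosDef) : 0 < S 2 2 := by
  have h := hS0.dotProduct_mulVec_pos (x := Pi.single 2 1) (by
    intro hc
    have := congrFun hc 2
    simp at this)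
  simpa [dotProduct, Matrix.mulVec, Pi.single_apply, Finset.sum_ite_eq] using h

theorem posG (hsym : ∀ i j, S j i = S i j) (hS0 : S.PosDef) : 0 < dG S := by
  have h := (LKJaux.posDef_submatrix_inj hS0 (f := ![2, 3])
    (by decide)).det_pos
  have e : (S.submatrix ![2, 3] ![2, 3]).det = dG S := by
    rw [Matrix.det_fin_two]
    simp only [Matrix.submatrix_apply, Matrix.cons_val_zero, Matrix.cons_val_one,
      Matrix.head_cons]
    rw [hsym 2 3, dG]
    ring
  linarith [e ▸ h]

theorem posH (hsym : ∀ i j, S j i = S i j) (hS0 : S.PosDef) : 0 < dH S := by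
  have h := (LKJaux.posDef_submatrix_inj hS0 (f := ![1, 2, 3])
    (by decide)).det_pos
  have e : (S.submatrix ![1, 2, 3] ![1, 2, 3]).det = dH S := by
    rw [Matrix.det_fin_three]
    simp only [Matrix.submatrix_apply, Matrix.cons_val_zero, Matrix.cons_val_one,
      Matrix.head_cons, Matrix.cons_val_two, Matrix.tail_cons]
    rw [hsym 1 2, hsym 1 3, hsym 2 3, dH]
    ring
  linarith [e ▸ h]

theorem posS4 (hsym : ∀ i j, S j i = S i j) (hS0 : S.PosDef) : 0 < dS4 S := by
  have := hS0.det_pos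
  rwa [det_eq S hsym] at this

/-- The 3×3 block of `(Z, W_Z, W_Y)`. -/
noncomputable def Hm : Matrix (Fin 3) (Fin 3) ℝ :=
  !![S 1 1, S 1 2, S 1 3; S 1 2, S 2 2, S 2 3; S 1 3, S 2 3, S 3 3]

noncomputable def Bm : Matrix (Fin 3) (Fin 2) ℝ :=
  !![S 0 1, v 1; S 0 2, v 2; S 0 3, v 3]

noncomputable def Km : Matrix (Fin 2) (Fin 2) ℝ := !![S 0 0, v 0; v 0, 1]

def q5 : Fin 3 ⊕ Fin 2 ≃ Fin 5 :=
  ⟨Sum.elim ![1, 2, 3] ![0, 4],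
   ![Sum.inr 0, Sum.inl 0, Sum.inl 1, Sum.inl 2, Sum.inr 1], by decide, by decide⟩

theorem fullCov_block (hsym : ∀ i j, S j i = S i j) :
    (fullCov S v).submatrix q5 q5 =
      Matrix.fromBlocks (Hm S) (Bm S v) (Bm S v)ᴴ (Km S v) := by
  ext i j
  rcases i with i | i <;> rcases j with j | j <;> fin_cases i <;> fin_cases j <;>
    first
      | rfl
      | exact hsym 1 2 | exact hsym 1 3 | exact hsym 2 3
      | exact hsym 0 1 | exact hsym 0 2 | exact hsym 0 3
      | simp [Hm, Bm, Km, fullCov, hsym 0 1, hsym 0 2, hsym 0 3, hsym 1 2, hsym 1 3,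
          hsym 2 3]

theorem Hm_posDef (hsym : ∀ i j, S j i = S i j) (hS0 : S.PosDef) : (Hm S).PosDef := by
  have h := LKJaux.posDef_submatrix_inj hS0 (f := ![1, 2, 3]) (by decide)
  have e : S.submatrix ![1, 2, 3] ![1, 2, 3] = Hm S := by
    ext i j
    fin_cases i <;> fin_cases j <;>
      first | rfl | exact hsym 1 2 | exact hsym 1 3 | exact hsym 2 3
  rwa [e] at h

theorem schur22 (hh : dH S ≠ 0) :
    Km S v - (Bm S v)ᴴ * (Hm S)⁻¹ * Bm S v =
      !![E3 S, C3 S v; C3 S v, D3 S v] := by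
  rw [Hm, inv3 (S 1 1) (S 1 2) (S 1 3) (S 2 2) (S 2 3) (S 3 3) (dH S) (by rw [dH]; ring) hh]
  ext i j
  fin_cases i <;> fin_cases j <;> simp only [Fin.zero_eta, Fin.mk_one, Fin.isValue] <;>
    · simp only [Km, Bm, E3, C3, D3, Matrix.sub_apply, Matrix.mul_apply,
        Matrix.conjTranspose_apply, Fin.sum_univ_three, Matrix.smul_apply, smul_eq_mul,
        star_trivial, Matrix.cons_val_zero, Matrix.cons_val_one, Matrix.head_cons,
        Matrix.of_apply, Matrix.cons_val', Matrix.empty_val', Matrix.cons_val_fin_one,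
        Matrix.head_fin_const, Matrix.vecHead, Matrix.vecTail, Matrix.cons_val_two,
        Matrix.tail_cons, Matrix.cons_val, Function.comp_apply, Fin.succ_zero_eq_one]
      field_simp
      try simp only [dH, dS4]
      try ring

theorem posdef_iff (hsym : ∀ i j, S j i = S i j) (hS0 : S.PosDef) :
    (fullCov S v).PosDef ↔ 0 < D4 S v := by
  have hh : dH S ≠ 0 := (posH S hsym hS0).ne'
  have hE3 : 0 < E3 S := div_pos (posS4 S hsym hS0) (posH S hsym hS0)
  have hHpd := Hm_posDef S hsym hS0
  haveI := Matrix.invertibleOfIsUnitDet (Hm S) (isUnit_iff_ne_zero.2 hHpd.det_pos.ne')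
  rw [← LKJaux.posDef_submatrix_equiv q5, fullCov_block S v hsym,
    LKJaux.posDef_fromBlocks₁₁ _ _ hHpd, schur22 S v hh, LKJaux.posDef_fin_two]
  have key : E3 S * D4 S v = E3 S * D3 S v - (C3 S v) ^ 2 := by
    rw [D4]
    field_simp
    try ring
  constructor
  · rintro ⟨-, h2⟩
    nlinarith [key, hE3, h2]
  · intro h
    refine ⟨hE3, ?_⟩
    nlinarith [key, mul_pos hE3 h]

theorem corr_mem {c d e : ℝ} (hd : 0 < d) (he : 0 < e) (h : c ^ 2 < d * e) :
    c / Real.sqrt (d * e) ∈ Set.Ioo (-1 : ℝ) 1 := by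
  have hde : 0 < d * e := mul_pos hd he
  have hs : 0 < Real.sqrt (d * e) := Real.sqrt_pos.2 hde
  have habs : |c / Real.sqrt (d * e)| < 1 := by
    rw [abs_div, abs_of_pos hs, div_lt_one hs, ← Real.sqrt_sq_eq_abs]
    exact Real.sqrt_lt_sqrt (sq_nonneg c) h
  exact abs_lt.mp habs

theorem Dchain (hsym : ∀ i j, S j i = S i j) (hS0 : S.PosDef)
    (hv : (fullCov S v).PosDef) :
    0 < D1 S v ∧ 0 < D2 S v ∧ 0 < D3 S v ∧ 0 < D4 S v := by
  have h22 := (pos22 S hS0).ne'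
  have hg := (posG S hsym hS0).ne'
  have hh := (posH S hsym hS0).ne'
  have hE1 : 0 < E1 S := div_pos (posG S hsym hS0) (pos22 S hS0)
  have hE2 : 0 < E2 S := div_pos (posH S hsym hS0) (posG S hsym hS0)
  have hE3 : 0 < E3 S := div_pos (posS4 S hsym hS0) (posH S hsym hS0)
  have hD4 : 0 < D4 S v := (posdef_iff S v hsym hS0).1 hv
  have hD3 : 0 < D3 S v := by
    have h1 : 0 ≤ (C3 S v) ^ 2 / E3 S := div_nonneg (sq_nonneg _) hE3.le
    have := hD4
    rw [D4] at this
    linarith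
  have hD2 : 0 < D2 S v := by
    have h1 : 0 ≤ (C2 S v) ^ 2 / E2 S := div_nonneg (sq_nonneg _) hE2.le
    have := R3 S v hg hh
    linarith
  have hD1 : 0 < D1 S v := by
    have h1 : 0 ≤ (C1 S v) ^ 2 / E1 S := div_nonneg (sq_nonneg _) hE1.le
    have := R2 S v h22 hg
    linarith
  exact ⟨hD1, hD2, hD3, hD4⟩



theorem div_cancel_eq {a b s : ℝ} (hs : s ≠ 0) (h : a / s = b / s) : a = b := by
  field_simp at h
  exact h

theorem Csurj (c0 c1 c2 c3 : ℝ) (h22 : S 2 2 ≠ 0) (hg : dG S ≠ 0) (hh : dH S ≠ 0) :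
    ∃ v : Fin 4 → ℝ, C0 v = c0 ∧ C1 S v = c1 ∧ C2 S v = c2 ∧ C3 S v = c3 := by
  obtain ⟨x2, hx2⟩ : ∃ x : ℝ, x = c0 := ⟨_, rfl⟩
  obtain ⟨x3, hx3⟩ : ∃ x : ℝ, x = c1 + S 2 3 * x2 / S 2 2 := ⟨_, rfl⟩
  obtain ⟨x1, hx1⟩ : ∃ x : ℝ, x = c2 + (0 - S 1 3 * S 2 3 * x2 + S 1 3 * S 2 2 * x3 + S 1 2 * S 3 3 * x2 - S 1 2 * S 2 3 * x3) / dG S := ⟨_, rfl⟩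
  obtain ⟨x0, hx0⟩ : ∃ x : ℝ, x = c3 + (0 - S 0 3 * S 1 3 * S 2 2 * x1 + S 0 3 * S 1 2 * S 2 3 * x1 + S 0 3 * S 1 2 * S 1 3 * x2 - S 0 3 * S 1 2 ^ 2 * x3 - S 0 3 * S 1 1 * S 2 3 * x2 + S 0 3 * S 1 1 * S 2 2 * x3 + S 0 2 * S 1 3 * S 2 3 * x1 - S 0 2 * S 1 3 ^ 2 * x2 - S 0 2 * S 1 2 * S 3 3 * x1 + S 0 2 * S 1 2 * S 1 3 * x3 + S 0 2 * S 1 1 * S 3 3 * x2 - S 0 2 * S 1 1 * S 2 3 * x3 - S 0 1 * S 2 3 ^ 2 * x1 + S 0 1 * S 2 2 * S 3 3 * x1 + S 0 1 * S 1 3 * S 2 3 * x2 - S 0 1 * S 1 3 * S 2 2 * x3 - S 0 1 * S 1 2 * S 3 3 * x2 + S 0 1 * S 1 2 * S 2 3 * x3) / dH S := ⟨_, rfl⟩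
  have e0 : (![x0, x1, x2, x3] : Fin 4 → ℝ) 0 = x0 := rfl
  have e1 : (![x0, x1, x2, x3] : Fin 4 → ℝ) 1 = x1 := rfl
  have e2 : (![x0, x1, x2, x3] : Fin 4 → ℝ) 2 = x2 := rfl
  have e3 : (![x0, x1, x2, x3] : Fin 4 → ℝ) 3 = x3 := rfl
  refine ⟨![x0, x1, x2, x3], hx2, ?_, ?_, ?_⟩
  · rw [C1, e3, e2, hx3, hx2]
    ring
  · rw [C2, e1, e2, e3, hx1]
    ring
  · rw [C3, e0, e1, e2, e3, hx0]
    ring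

end LKJ

/-- Lewandowski–Kurowicka–Joe parametrization: fixing a positive-definite 4×4 covariance
block `S0` of `(Y, Z, W_Z, W_Y)` and `Var(U) = 1`, the map sending the free covariances
`v = Cov(U, ·)` of a positive-definite completion to the partial correlations
`ρ = (R_{U∼W_Z}, R_{U∼W_Y|W_Z}, R_{U∼Z|W_Y,W_Z}, R_{U∼Y|Z,W_Z,W_Y})` is a bijection onto
the open cube `(−1, 1)⁴`. -/
theorem stmt_19 (S0 : Matrix (Fin 4) (Fin 4) ℝ) (hS0 : S0.PosDef) :
    Set.BijOn (fun v : Fin 4 → ℝ => rhoMap (fullCov S0 v))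
      {v : Fin 4 → ℝ | (fullCov S0 v).PosDef}
      {ρ : Fin 4 → ℝ | ∀ i, ρ i ∈ Set.Ioo (-1 : ℝ) 1} := by
  have hsym : ∀ i j, S0 j i = S0 i j := fun i j => by simpa using hS0.1.apply i j
  have h22p := LKJ.pos22 S0 hS0
  have hGp := LKJ.posG S0 hsym hS0
  have hHp := LKJ.posH S0 hsym hS0
  have hSp := LKJ.posS4 S0 hsym hS0
  have h22 : S0 2 2 ≠ 0 := h22p.ne'
  have hg : LKJ.dG S0 ≠ 0 := hGp.ne'
  have hh : LKJ.dH S0 ≠ 0 := hHp.ne'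
  have hE0 : 0 < LKJ.E0 S0 := h22p
  have hE1 : 0 < LKJ.E1 S0 := div_pos hGp h22p
  have hE2 : 0 < LKJ.E2 S0 := div_pos hHp hGp
  have hE3 : 0 < LKJ.E3 S0 := div_pos hSp hHp
  have hD0 : (0 : ℝ) < LKJ.D0 := one_pos
  have rho0 : ∀ v : Fin 4 → ℝ, rhoMap (fullCov S0 v) 0
      = LKJ.C0 v / Real.sqrt (LKJ.D0 * LKJ.E0 S0) := fun v => by
    show pcorr (fullCov S0 v) 4 2 ∅ = _
    rw [pcorr, LKJ.ev_C0, LKJ.ev_D0, LKJ.ev_E0]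
  have rho1 : ∀ v : Fin 4 → ℝ, rhoMap (fullCov S0 v) 1
      = LKJ.C1 S0 v / Real.sqrt (LKJ.D1 S0 v * LKJ.E1 S0) := fun v => by
    show pcorr (fullCov S0 v) 4 3 {2} = _
    rw [pcorr, LKJ.ev_C1 S0 v h22, LKJ.ev_D1 S0 v h22, LKJ.ev_E1 S0 v hsym h22]
  have rho2 : ∀ v : Fin 4 → ℝ, rhoMap (fullCov S0 v) 2
      = LKJ.C2 S0 v / Real.sqrt (LKJ.D2 S0 v * LKJ.E2 S0) := fun v => by
    show pcorr (fullCov S0 v) 4 1 {3, 2} = _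
    rw [pcorr, LKJ.ev_C2 S0 v hsym hg, LKJ.ev_D2 S0 v hsym hg, LKJ.ev_E2 S0 v hsym hg]
  have rho3 : ∀ v : Fin 4 → ℝ, rhoMap (fullCov S0 v) 3
      = LKJ.C3 S0 v / Real.sqrt (LKJ.D3 S0 v * LKJ.E3 S0) := fun v => by
    show pcorr (fullCov S0 v) 4 0 {1, 2, 3} = _
    rw [pcorr, LKJ.ev_C3 S0 v hsym hh, LKJ.ev_D3 S0 v hsym hh, LKJ.ev_E3 S0 v hsym hh]
  refine ⟨?_, ?_, ?_⟩
  · -- MapsTo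
    intro v hv
    obtain ⟨hD1, hD2, hD3, hD4⟩ := LKJ.Dchain S0 v hsym hS0 hv
    intro i
    fin_cases i
    · show rhoMap (fullCov S0 v) 0 ∈ Set.Ioo (-1 : ℝ) 1
      rw [rho0 v]
      refine LKJ.corr_mem hD0 hE0 ?_
      have r : LKJ.D1 S0 v = LKJ.D0 - (LKJ.C0 v) ^ 2 / LKJ.E0 S0 := rfl
      refine (div_lt_iff₀ hE0).mp ?_
      linarith
    · show rhoMap (fullCov S0 v) 1 ∈ Set.Ioo (-1 : ℝ) 1
      rw [rho1 v]
      refine LKJ.corr_mem hD1 hE1 ?_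
      have r := LKJ.R2 S0 v h22 hg
      refine (div_lt_iff₀ hE1).mp ?_
      linarith
    · show rhoMap (fullCov S0 v) 2 ∈ Set.Ioo (-1 : ℝ) 1
      rw [rho2 v]
      refine LKJ.corr_mem hD2 hE2 ?_
      have r := LKJ.R3 S0 v hg hh
      refine (div_lt_iff₀ hE2).mp ?_
      linarith
    · show rhoMap (fullCov S0 v) 3 ∈ Set.Ioo (-1 : ℝ) 1
      rw [rho3 v]
      refine LKJ.corr_mem hD3 hE3 ?_
      have r : LKJ.D4 S0 v = LKJ.D3 S0 v - (LKJ.C3 S0 v) ^ 2 / LKJ.E3 S0 := rfl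
      refine (div_lt_iff₀ hE3).mp ?_
      linarith
  · -- InjOn
    intro v hv w hw heq
    simp only [Set.mem_setOf_eq] at hv hw
    obtain ⟨hD1v, hD2v, hD3v, hD4v⟩ := LKJ.Dchain S0 v hsym hS0 hv
    obtain ⟨hD1w, hD2w, hD3w, hD4w⟩ := LKJ.Dchain S0 w hsym hS0 hw
    have hs0 : Real.sqrt (LKJ.D0 * LKJ.E0 S0) ≠ 0 :=
      (Real.sqrt_pos.2 (mul_pos hD0 hE0)).ne'
    have heq' : ∀ i, rhoMap (fullCov S0 v) i = rhoMap (fullCov S0 w) i :=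
      fun i => congrFun heq i
    have hC0 : LKJ.C0 v = LKJ.C0 w := by
      have h := heq' 0
      rw [rho0 v, rho0 w] at h
      exact LKJ.div_cancel_eq hs0 h
    have hv2 : v 2 = w 2 := hC0
    have hD1e : LKJ.D1 S0 v = LKJ.D1 S0 w := by simp only [LKJ.D1, hv2]
    have hs1 : Real.sqrt (LKJ.D1 S0 w * LKJ.E1 S0) ≠ 0 :=
      (Real.sqrt_pos.2 (mul_pos hD1w hE1)).ne'
    have hC1 : LKJ.C1 S0 v = LKJ.C1 S0 w := by
      have h := heq' 1
      rw [rho1 v, rho1 w, hD1e] at h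
      exact LKJ.div_cancel_eq hs1 h
    have hv3 : v 3 = w 3 := by
      rw [LKJ.C1, LKJ.C1, hv2] at hC1
      linarith
    have hD2e : LKJ.D2 S0 v = LKJ.D2 S0 w := by simp only [LKJ.D2, hv2, hv3]
    have hs2 : Real.sqrt (LKJ.D2 S0 w * LKJ.E2 S0) ≠ 0 :=
      (Real.sqrt_pos.2 (mul_pos hD2w hE2)).ne'
    have hC2 : LKJ.C2 S0 v = LKJ.C2 S0 w := by
      have h := heq' 2
      rw [rho2 v, rho2 w, hD2e] at h
      exact LKJ.div_cancel_eq hs2 h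
    have hv1 : v 1 = w 1 := by
      rw [LKJ.C2, LKJ.C2, hv2, hv3] at hC2
      linarith
    have hD3e : LKJ.D3 S0 v = LKJ.D3 S0 w := by simp only [LKJ.D3, hv1, hv2, hv3]
    have hs3 : Real.sqrt (LKJ.D3 S0 w * LKJ.E3 S0) ≠ 0 :=
      (Real.sqrt_pos.2 (mul_pos hD3w hE3)).ne'
    have hC3 : LKJ.C3 S0 v = LKJ.C3 S0 w := by
      have h := heq' 3
      rw [rho3 v, rho3 w, hD3e] at h
      exact LKJ.div_cancel_eq hs3 h
    have hv0 : v 0 = w 0 := by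
      rw [LKJ.C3, LKJ.C3, hv1, hv2, hv3] at hC3
      linarith
    funext i
    fin_cases i
    · exact hv0
    · exact hv1
    · exact hv2
    · exact hv3
  · -- SurjOn
    intro ρ hρ
    simp only [Set.mem_setOf_eq] at hρ
    have hr0 := hρ 0
    have hr1 := hρ 1
    have hr2 := hρ 2
    have hr3 := hρ 3
    obtain ⟨d1, hd1def⟩ : ∃ x : ℝ, x = LKJ.D0 * (1 - ρ 0 ^ 2) := ⟨_, rfl⟩
    obtain ⟨d2, hd2def⟩ : ∃ x : ℝ, x = d1 * (1 - ρ 1 ^ 2) := ⟨_, rfl⟩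
    obtain ⟨d3, hd3def⟩ : ∃ x : ℝ, x = d2 * (1 - ρ 2 ^ 2) := ⟨_, rfl⟩
    have hd1 : 0 < d1 := by rw [hd1def]; exact mul_pos hD0 (by nlinarith [hr0.1, hr0.2])
    have hd2 : 0 < d2 := by rw [hd2def]; exact mul_pos hd1 (by nlinarith [hr1.1, hr1.2])
    have hd3 : 0 < d3 := by rw [hd3def]; exact mul_pos hd2 (by nlinarith [hr2.1, hr2.2])
    obtain ⟨c0, hc0def⟩ : ∃ x : ℝ, x = ρ 0 * Real.sqrt (LKJ.D0 * LKJ.E0 S0) := ⟨_, rfl⟩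
    obtain ⟨c1, hc1def⟩ : ∃ x : ℝ, x = ρ 1 * Real.sqrt (d1 * LKJ.E1 S0) := ⟨_, rfl⟩
    obtain ⟨c2, hc2def⟩ : ∃ x : ℝ, x = ρ 2 * Real.sqrt (d2 * LKJ.E2 S0) := ⟨_, rfl⟩
    obtain ⟨c3, hc3def⟩ : ∃ x : ℝ, x = ρ 3 * Real.sqrt (d3 * LKJ.E3 S0) := ⟨_, rfl⟩
    obtain ⟨v, hc0, hc1, hc2, hc3⟩ := LKJ.Csurj S0 c0 c1 c2 c3 h22 hg hh
    have hD1v : LKJ.D1 S0 v = d1 := by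
      have r : LKJ.D1 S0 v = LKJ.D0 - (LKJ.C0 v) ^ 2 / LKJ.E0 S0 := rfl
      rw [r, hc0, hc0def, mul_pow,
        Real.sq_sqrt (mul_pos hD0 hE0).le, hd1def]
      field_simp
    have hD2v : LKJ.D2 S0 v = d2 := by
      rw [LKJ.R2 S0 v h22 hg, hD1v, hc1, hc1def, mul_pow,
        Real.sq_sqrt (mul_pos hd1 hE1).le, hd2def]
      field_simp
    have hD3v : LKJ.D3 S0 v = d3 := by
      rw [LKJ.R3 S0 v hg hh, hD2v, hc2, hc2def, mul_pow,
        Real.sq_sqrt (mul_pos hd2 hE2).le, hd3def]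
      field_simp
    have hD4v : 0 < LKJ.D4 S0 v := by
      have r : LKJ.D4 S0 v = LKJ.D3 S0 v - (LKJ.C3 S0 v) ^ 2 / LKJ.E3 S0 := rfl
      rw [r, hD3v, hc3, hc3def, mul_pow, Real.sq_sqrt (mul_pos hd3 hE3).le]
      have key : d3 - ρ 3 ^ 2 * (d3 * LKJ.E3 S0) / LKJ.E3 S0 = d3 * (1 - ρ 3 ^ 2) := by
        field_simp
      rw [key]
      exact mul_pos hd3 (by nlinarith [hr3.1, hr3.2])
    refine ⟨v, (LKJ.posdef_iff S0 v hsym hS0).2 hD4v, ?_⟩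
    funext i
    fin_cases i
    · show rhoMap (fullCov S0 v) 0 = ρ 0
      rw [rho0 v, hc0, hc0def]
      exact mul_div_cancel_right₀ _ (Real.sqrt_pos.2 (mul_pos hD0 hE0)).ne'
    · show rhoMap (fullCov S0 v) 1 = ρ 1
      rw [rho1 v, hD1v, hc1, hc1def]
      exact mul_div_cancel_right₀ _ (Real.sqrt_pos.2 (mul_pos hd1 hE1)).ne'
    · show rhoMap (fullCov S0 v) 2 = ρ 2
      rw [rho2 v, hD2v, hc2, hc2def]
      exact mul_div_cancel_right₀ _ (Real.sqrt_pos.2 (mul_pos hd2 hE2)).ne'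
    · show rhoMap (fullCov S0 v) 3 = ρ 3
      rw [rho3 v, hD3v, hc3, hc3def]
      exact mul_div_cancel_right₀ _ (Real.sqrt_pos.2 (mul_pos hd3 hE3)).ne'
end
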